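/- Let A be a complete normed unital algebra (Banach algebra) over ℝ, let m be a real scalar, and let Pₓ, K, G ∈ A satisfy PₓK − KPₓ = G, PₓG − GPₓ = m·1, and KG − GK = 0. Then for all real a, b: exp(b·Pₓ) · exp(a·K) = e^{m·a·b²/2} · exp(a·K) · exp(a·b·G) · exp(b·Pₓ), where exp is the exponential defined by its power series in A. -/

import Mathlib

open NormedSpace

lemma const_of_hasDerivAt_zero {E : Type*} [NormedAddCommGroup E] [NormedSpace ℝ E]
    {f : ℝ → E} (h : ∀ t, HasDerivAt f 0 t) (s t : ℝ) : f s = f t :=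
  is_const_of_deriv_eq_zero (fun x => (h x).differentiableAt)
    (fun x => (h x).deriv) s t

lemma conj_exp_aux {A : Type*} [NormedRing A] [NormedAlgebra ℝ A] [CompleteSpace A]
    (x y z : A) (hxy : x * y - y * x = z) (hyz : y * z = z * y) (t : ℝ) :
    x * exp (t • y) = exp (t • y) * x + t • (exp (t • y) * z) := by
  set f : ℝ → A := fun t => x * exp (t • y) - exp (t • y) * x - t • (exp (t • y) * z)
    with hfdef
  have hcomm : ∀ s : ℝ, Commute y (exp (s • (-y))) := fun s =>
    (((Commute.refl y).neg_right).smul_right s).exp_right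
  have hf : ∀ s, HasDerivAt f (f s * y) s := by
    intro s
    have he := hasDerivAt_exp_smul_const (𝕂 := ℝ) y s
    have d1 : HasDerivAt (fun u : ℝ => x * exp (u • y)) (x * (exp (s • y) * y)) s :=
      he.const_mul x
    have d2 : HasDerivAt (fun u : ℝ => exp (u • y) * x) (exp (s • y) * y * x) s :=
      he.mul_const x
    have d3 : HasDerivAt (fun u : ℝ => u • (exp (u • y) * z))
        (s • (exp (s • y) * y * z) + (1 : ℝ) • (exp (s • y) * z)) s :=
      (hasDerivAt_id s).smul (he.mul_const z)
    have := (d1.sub d2).sub d3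
    refine this.congr_deriv (Eq.symm ?_)
    have hz : exp (s • y) * z = exp (s • y) * (x * y) - exp (s • y) * (y * x) := by
      rw [← mul_sub, hxy]
    simp only [hfdef, sub_mul, smul_mul_assoc, one_smul]
    rw [mul_assoc (exp (s • y)) z y, ← hyz, hz]
    simp only [mul_assoc]
    abel
  set g : ℝ → A := fun s => f s * exp (s • (-y)) with hgdef
  have hg : ∀ s, HasDerivAt g 0 s := by
    intro s
    have he := hasDerivAt_exp_smul_const (𝕂 := ℝ) (-y) s
    have := (hf s).mul he
    refine this.congr_deriv (Eq.symm ?_)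
    have hy : y * exp (s • (-y)) = exp (s • (-y)) * y := (hcomm s).eq
    rw [mul_neg, mul_neg, ← hy, ← mul_assoc, add_neg_cancel]
  have hg0 : g 0 = 0 := by
    simp [hgdef, hfdef, exp_zero]
  have hgt : g t = 0 := by rw [const_of_hasDerivAt_zero hg t 0, hg0]
  have hinv : exp (-(t • y)) * exp (t • y) = 1 := by
    rw [← exp_add_of_commute_of_mem_ball (𝕂 := ℝ) ((Commute.refl (t • y)).neg_left) ((expSeries_radius_eq_top ℝ A).symm ▸ edist_lt_top _ _)
        ((expSeries_radius_eq_top ℝ A).symm ▸ edist_lt_top _ _), neg_add_cancel, exp_zero]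
  have hft : f t = 0 := by
    have := congrArg (fun w => w * exp (t • y)) hgt
    simpa [hgdef, mul_assoc, hinv] using this
  simpa only [hfdef, sub_sub, sub_eq_zero] using hft

/-- Exponential exchange identity (step 4 of the Schrödinger Leibniz formula) in a
real Banach algebra: if `[Pₓ,K] = G`, `[Pₓ,G] = m·1` and `[K,G] = 0`, then
`exp(bPₓ)·exp(aK) = e^{mab²/2} · exp(aK) · exp(abG) · exp(bPₓ)`. -/
theorem schrodinger_exchange_Px_K {A : Type*} [NormedRing A] [NormedAlgebra ℝ A]
    [CompleteSpace A] (m : ℝ) (Px K G : A)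
    (h1 : Px * K - K * Px = G) (h2 : Px * G - G * Px = m • (1 : A))
    (h3 : K * G - G * K = 0) (a b : ℝ) :
    exp (b • Px) * exp (a • K)
      = Real.exp (m * a * b ^ 2 / 2) • (exp (a • K) * exp ((a * b) • G) * exp (b • Px)) := by
  set E : A := exp (a • K) with hE
  -- commutation of Px with E
  have hPE : Px * E = E * Px + a • (E * G) :=
    conj_exp_aux Px K G h1 (sub_eq_zero.mp h3) a
  -- commutation of Px with exp(s • (a•G))
  have hPe : ∀ s : ℝ, Px * exp (s • (a • G))
      = exp (s • (a • G)) * Px + (s * a * m) • exp (s • (a • G)) := by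
    intro s
    have hz : G * (m • (1 : A)) = m • (1 : A) * G := by
      rw [mul_smul_comm, smul_mul_assoc, mul_one, one_mul]
    have := conj_exp_aux Px G (m • (1 : A)) h2 hz (s * a)
    rw [← smul_smul] at this
    rw [this, mul_smul_comm, mul_one]
    module
  have hGe : ∀ s : ℝ, G * exp (s • (a • G)) = exp (s • (a • G)) * G := fun s =>
    ((((Commute.refl G).smul_right a).smul_right s).exp_right).eq
  have hPw : ∀ s : ℝ, Px * exp (s • Px) = exp (s • Px) * Px := fun s =>
    ((Commute.refl Px).smul_right s).exp_right |>.eq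
  -- the two solutions of y' = Px y with y 0 = E
  set L : ℝ → A := fun s => exp (s • Px) * E with hLdef
  set R : ℝ → A := fun s =>
    Real.exp (m * a * s ^ 2 / 2) • (E * exp (s • (a • G)) * exp (s • Px)) with hRdef
  have hL : ∀ s, HasDerivAt L (Px * L s) s := by
    intro s
    have := (hasDerivAt_exp_smul_const' (𝕂 := ℝ) Px s).mul_const E
    simpa [hLdef, mul_assoc] using this
  have hR : ∀ s, HasDerivAt R (Px * R s) s := by
    intro s
    have hc : HasDerivAt (fun s : ℝ => Real.exp (m * a * s ^ 2 / 2))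
        (Real.exp (m * a * s ^ 2 / 2) * (m * a * s)) s := by
      have hpoly : HasDerivAt (fun s : ℝ => m * a * s ^ 2 / 2) (m * a * s) s := by
        have := ((hasDerivAt_pow 2 s).const_mul (m * a)).div_const 2
        refine this.congr_deriv (Eq.symm ?_)
        push_cast
        ring
      exact hpoly.exp
    have hv : HasDerivAt (fun s : ℝ => exp (s • (a • G)))
        (exp (s • (a • G)) * (a • G)) s := hasDerivAt_exp_smul_const _ _
    have hw : HasDerivAt (fun s : ℝ => exp (s • Px)) (exp (s • Px) * Px) s :=
      hasDerivAt_exp_smul_const _ _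
    have hinner := (hv.const_mul E).mul hw
    have := hc.smul hinner
    simp only [Pi.mul_apply] at this
    refine this.congr_deriv (Eq.symm ?_)
    set e : A := exp (s • (a • G))
    set w : A := exp (s • Px)
    set c : ℝ := Real.exp (m * a * s ^ 2 / 2)
    -- key algebraic identity
    have hmain : Px * (E * e * w)
        = E * (e * (a • G)) * w + E * e * (w * Px) + (s * a * m) • (E * e * w) := by
      calc Px * (E * e * w) = Px * E * e * w := by simp only [mul_assoc]
        _ = (E * Px + a • (E * G)) * e * w := by rw [hPE]
        _ = E * (Px * e) * w + a • (E * (G * e) * w) := by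
            simp only [add_mul, smul_mul_assoc, mul_assoc]
        _ = E * (e * Px + (s * a * m) • e) * w + a • (E * (e * G) * w) := by
            rw [hPe s, hGe s]
        _ = E * e * (Px * w) + (s * a * m) • (E * e * w) + a • (E * e * (G * w)) := by
            simp only [mul_add, add_mul, mul_smul_comm, smul_mul_assoc, mul_assoc]
        _ = E * (e * (a • G)) * w + E * e * (w * Px) + (s * a * m) • (E * e * w) := by
            rw [hPw s]
            simp only [mul_smul_comm, smul_mul_assoc, mul_assoc]
            abel
    rw [hRdef]
    simp only
    rw [mul_smul_comm, hmain]
    simp only [smul_add, smul_smul]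
    match_scalars <;> ring
  -- uniqueness
  have hD : ∀ s, HasDerivAt (fun s => exp (s • (-Px)) * (L s - R s)) 0 s := by
    intro s
    have hu := hasDerivAt_exp_smul_const (𝕂 := ℝ) (-Px) s
    have hLR : HasDerivAt (fun s => L s - R s) (Px * (L s - R s)) s := by
      rw [mul_sub]; exact (hL s).sub (hR s)
    have := hu.mul hLR
    refine this.congr_deriv (Eq.symm ?_)
    rw [mul_neg, neg_mul, mul_assoc, neg_add_cancel]
  have hD0 : exp ((0:ℝ) • (-Px)) * (L 0 - R 0) = 0 := by
    simp [hLdef, hRdef, exp_zero]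
  have hDb : exp (b • (-Px)) * (L b - R b) = 0 := by
    rw [const_of_hasDerivAt_zero hD b 0, hD0]
  have hinv : exp (b • Px) * exp (b • (-Px)) = 1 := by
    rw [smul_neg, ← exp_add_of_commute_of_mem_ball (𝕂 := ℝ) ((Commute.refl (b • Px)).neg_right) ((expSeries_radius_eq_top ℝ A).symm ▸ edist_lt_top _ _)
        ((expSeries_radius_eq_top ℝ A).symm ▸ edist_lt_top _ _), add_neg_cancel,
      exp_zero]
  have hLR0 : L b = R b := by
    have := congrArg (fun w => exp (b • Px) * w) hDb
    simp only [← mul_assoc, hinv, one_mul, mul_zero] at this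
    exact sub_eq_zero.mp this
  have : exp (b • (a • G)) = exp ((a * b) • G) := by
    rw [smul_smul, mul_comm]
  rw [hLdef] at hLR0
  simp only at hLR0
  rw [hLR0, hRdef]
  simp only [this]
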